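/- Let f : ℝ^{d_x} × ℝ^{d_y} → ℝ be differentiable with L_g-Lipschitz gradient, let y* : ℝ^{d_x} → ℝ^{d_y} be L_y-Lipschitz, let μ > 0, and set C_p = L_g(1 + L_y)L_y. Define ḡ(x) = ∇_x f(x, y*(x)) + Jac y_μ(x)ᵀ ∇_y f(x, y*(x)) and F_μ(x) = f(x, y_μ(x)). Then for every x ∈ ℝ^{d_x}, ⟨∇F_μ(x), ḡ(x)⟩ ≥ (1/2)‖ḡ(x)‖² − (1/2) C_p² μ². -/

import Mathlib

open MeasureTheory Metric
open scoped InnerProductSpace RealInnerProductSpace NNReal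

noncomputable section

/-- `ℝ^n` with the Euclidean norm. -/
abbrev E (n : ℕ) : Type := EuclideanSpace ℝ (Fin n)

/-- Uniform (normalized Lebesgue) probability measure on the closed unit ball of `ℝ^n`. -/
def uniformBall (n : ℕ) : Measure (E n) :=
  (volume (closedBall (0 : E n) 1))⁻¹ • volume.restrict (closedBall (0 : E n) 1)

/-- Uniform (rotation-invariant) probability measure on the unit sphere of `ℝ^n`,
viewed as a measure on the ambient space. -/
def uniformSphere (n : ℕ) : Measure (E n) :=
  ((volume : Measure (E n)).toSphere Set.univ)⁻¹ •
    Measure.map Subtype.val ((volume : Measure (E n)).toSphere)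

/-- Ball smoothing `y_μ` of a map `y : ℝ^{d_x} → ℝ^{d_y}`:
`y_μ(x) = E_{u ~ U(B^{d_x})}[y(x + μ u)]`. -/
def ymu {dx dy : ℕ} (y : E dx → E dy) (μ : ℝ) (x : E dx) : E dy :=
  ∫ u, y (x + μ • u) ∂(uniformBall dx)

/-- Partial gradient `∇_x f` of `f : ℝ^{d_x} × ℝ^{d_y} → ℝ` in its first argument. -/
def gradx {dx dy : ℕ} (f : E dx × E dy → ℝ) (x : E dx) (y : E dy) : E dx :=
  gradient (fun x' => f (x', y)) x

/-- Partial gradient `∇_y f` of `f : ℝ^{d_x} × ℝ^{d_y} → ℝ` in its second argument. -/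
def grady {dx dy : ℕ} (f : E dx × E dy → ℝ) (x : E dx) (y : E dy) : E dy :=
  gradient (fun y' => f (x, y')) y

/-- Smoothed surrogate `F_μ(x) = f(x, y_μ(x))`. -/
def Fmu {dx dy : ℕ} (f : E dx × E dy → ℝ) (y : E dx → E dy) (μ : ℝ) (x : E dx) : ℝ :=
  f (x, ymu y μ x)

section Aux
variable {dx dy : ℕ}

lemma ball_vol_pos (n : ℕ) : 0 < volume (closedBall (0 : E n) 1) :=
  lt_of_lt_of_le (measure_ball_pos _ _ one_pos) (measure_mono ball_subset_closedBall)

lemma ball_vol_ne_top (n : ℕ) : volume (closedBall (0 : E n) 1) ≠ ⊤ :=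
  (isCompact_closedBall 0 1).measure_ne_top

instance (n : ℕ) : IsProbabilityMeasure (uniformBall n) := by
  constructor
  rw [uniformBall, Measure.smul_apply, Measure.restrict_apply_univ, smul_eq_mul,
    ENNReal.inv_mul_cancel (ball_vol_pos n).ne' (ball_vol_ne_top n)]

lemma uniformBall_apply {n : ℕ} {s : Set (E n)} (hs : MeasurableSet s) :
    uniformBall n s = (volume (closedBall (0 : E n) 1))⁻¹ * volume (s ∩ closedBall 0 1) := by
  rw [uniformBall, Measure.smul_apply, Measure.restrict_apply hs, smul_eq_mul]

lemma uniformBall_null {n : ℕ} {s : Set (E n)} (hs : volume s = 0) : uniformBall n s = 0 := by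
  rw [uniformBall, Measure.smul_apply, smul_eq_mul]
  have : volume.restrict (closedBall (0 : E n) 1) s = 0 :=
    le_antisymm (le_trans (Measure.restrict_le_self s) hs.le) (by simp)
  rw [this, mul_zero]

lemma uniformBall_ac {n : ℕ} : uniformBall n ≪ volume := fun _ h => uniformBall_null h

lemma ae_norm_le_one (n : ℕ) : ∀ᵐ u ∂(uniformBall n), ‖u‖ ≤ 1 := by
  rw [ae_iff]
  have hm : MeasurableSet {u : E n | ¬ ‖u‖ ≤ 1} := by
    simpa using (isOpen_lt continuous_const continuous_norm).measurableSet
  rw [uniformBall_apply hm]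
  have : {u : E n | ¬ ‖u‖ ≤ 1} ∩ closedBall 0 1 = ∅ := by
    ext u; simp only [Set.mem_inter_iff, Set.mem_setOf_eq, mem_closedBall, dist_zero_right,
      Set.mem_empty_iff_false, iff_false, not_and]; intro h1 h2; exact h1 h2
  rw [this]
  simp

/-- a.e. transfer along `u ↦ x + μ • u`. -/
lemma ae_comp_affine {n : ℕ} {μ : ℝ} (hμ : μ ≠ 0) (x : E n) {p : E n → Prop}
    (h : ∀ᵐ v ∂(volume : Measure (E n)), p v) :
    ∀ᵐ u ∂(uniformBall n), p (x + μ • u) := by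
  have h1 : Measure.QuasiMeasurePreserving (fun u : E n => x + μ • u) volume volume := by
    have hs : Measure.QuasiMeasurePreserving (fun u : E n => μ • u) volume volume :=
      Measure.quasiMeasurePreserving_smul _ hμ
    have ht : Measure.QuasiMeasurePreserving (fun v : E n => x + v) volume volume :=
      (measurePreserving_add_left volume x).quasiMeasurePreserving
    exact ht.comp hs
  exact uniformBall_ac.ae_le (h1.ae h)

lemma integrable_shift {g : E dx → E dy} (hg : Continuous g) (x : E dx) (μ : ℝ) :
    Integrable (fun u => g (x + μ • u)) (uniformBall dx) := by
  rw [uniformBall]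
  refine Integrable.smul_measure ?_ (by simp [(ball_vol_pos dx).ne'])
  exact ((hg.comp (continuous_const.add (continuous_const_smul μ))).continuousOn).integrableOn_compact (isCompact_closedBall 0 1)

lemma ymu_deriv {ystar : E dx → E dy} {Ly : ℝ≥0} (hLip : LipschitzWith Ly ystar)
    {μ : ℝ} (hμ : μ ≠ 0) (x : E dx) :
    HasFDerivAt (ymu ystar μ) (∫ u, fderiv ℝ ystar (x + μ • u) ∂(uniformBall dx)) x ∧
      ‖∫ u, fderiv ℝ ystar (x + μ • u) ∂(uniformBall dx)‖ ≤ (Ly : ℝ) := by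
  have key := hasFDerivAt_integral_of_dominated_loc_of_lip
    (F := fun x' u => ystar (x' + μ • u)) (F' := fun u => fderiv ℝ ystar (x + μ • u))
    (μ := uniformBall dx) (x₀ := x) (bound := fun _ => (Ly : ℝ)) (s := ball x 1) (ball_mem_nhds x one_pos)
    (Filter.Eventually.of_forall fun x' =>
      ((hLip.continuous.comp (continuous_const.add (continuous_const_smul μ))).aestronglyMeasurable))
    (integrable_shift hLip.continuous x μ)
    ((measurable_fderiv ℝ ystar |>.comp
      (measurable_const.add (measurable_id.const_smul μ))).aestronglyMeasurable)
    (Filter.Eventually.of_forall fun u => by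
      have hL : LipschitzWith Ly (fun x' => ystar (x' + μ • u)) := fun a b => by
        simpa [edist_add_right] using hLip (a + μ • u) (b + μ • u)
      rw [show Real.nnabs ((Ly : ℝ)) = Ly from by ext; simp]
      exact hL.lipschitzOnWith)
    (integrable_const _)
    (ae_comp_affine hμ x (hLip.ae_differentiableAt) |>.mono fun u hu => by
      have h1 : HasFDerivAt (fun x' : E dx => x' + μ • u) (ContinuousLinearMap.id ℝ (E dx)) x :=
        (hasFDerivAt_id x).add_const (μ • u)
      simpa [Function.comp_def] using (hu.hasFDerivAt.comp x h1))
  refine ⟨key.2, ?_⟩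
  have hb := norm_integral_le_of_norm_le (μ := uniformBall dx)
    (f := fun u => fderiv ℝ ystar (x + μ • u)) (integrable_const ((Ly : ℝ)))
    (Filter.Eventually.of_forall fun u => norm_fderiv_le_of_lipschitz ℝ hLip)
  simpa using hb

-- inner product of gradient with vector
lemma inner_gradient {g : E dx → ℝ} {x v : E dx} :
    ⟪gradient g x, v⟫_ℝ = fderiv ℝ g x v := by
  rw [gradient, InnerProductSpace.toDual_symm_apply]

lemma fderiv_partial_x (f : E dx × E dy → ℝ) (hf : Differentiable ℝ f) (x : E dx) (y : E dy) :
    fderiv ℝ (fun x' => f (x', y)) x = (fderiv ℝ f (x, y)).comp (ContinuousLinearMap.inl ℝ (E dx) (E dy)) :=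
  (HasFDerivAt.comp x (hf (x, y)).hasFDerivAt (hasFDerivAt_prodMk_left x y)).fderiv

lemma fderiv_partial_y (f : E dx × E dy → ℝ) (hf : Differentiable ℝ f) (x : E dx) (y : E dy) :
    fderiv ℝ (fun y' => f (x, y')) y = (fderiv ℝ f (x, y)).comp (ContinuousLinearMap.inr ℝ (E dx) (E dy)) :=
  (HasFDerivAt.comp y (hf (x, y)).hasFDerivAt (hasFDerivAt_prodMk_right x y)).fderiv

lemma norm_comp_inl_le (B : E dx × E dy →L[ℝ] ℝ) :
    ‖B.comp (ContinuousLinearMap.inl ℝ (E dx) (E dy))‖ ≤ ‖B‖ := by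
  refine ContinuousLinearMap.opNorm_le_bound _ (norm_nonneg B) fun v => ?_
  have : ‖((v, 0) : E dx × E dy)‖ = ‖v‖ := by
    simp [Prod.norm_def]
  calc ‖B (v, 0)‖ ≤ ‖B‖ * ‖((v, 0) : E dx × E dy)‖ := B.le_opNorm _
  _ = ‖B‖ * ‖v‖ := by rw [this]

lemma norm_comp_inr_le (B : E dx × E dy →L[ℝ] ℝ) :
    ‖B.comp (ContinuousLinearMap.inr ℝ (E dx) (E dy))‖ ≤ ‖B‖ := by
  refine ContinuousLinearMap.opNorm_le_bound _ (norm_nonneg B) fun v => ?_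
  have : ‖((0, v) : E dx × E dy)‖ = ‖v‖ := by
    simp [Prod.norm_def]
  calc ‖B (0, v)‖ ≤ ‖B‖ * ‖((0, v) : E dx × E dy)‖ := B.le_opNorm _
  _ = ‖B‖ * ‖v‖ := by rw [this]

lemma gradx_lip {f : E dx × E dy → ℝ} {Lg : ℝ≥0} (hf : Differentiable ℝ f)
    (hlip : ∀ p q : E dx × E dy, ‖fderiv ℝ f p - fderiv ℝ f q‖ ≤ (Lg : ℝ) * ‖p - q‖)
    (x : E dx) (y₁ y₂ : E dy) :
    ‖gradx f x y₁ - gradx f x y₂‖ ≤ (Lg : ℝ) * ‖y₁ - y₂‖ := by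
  have e : gradx f x y₁ - gradx f x y₂ = (InnerProductSpace.toDual ℝ (E dx)).symm
      (((fderiv ℝ f (x, y₁)) - (fderiv ℝ f (x, y₂))).comp (ContinuousLinearMap.inl ℝ (E dx) (E dy))) := by
    rw [gradx, gradx, gradient, gradient, fderiv_partial_x f hf, fderiv_partial_x f hf,
      ← LinearIsometryEquiv.map_sub]
    congr 1
  rw [e, LinearIsometryEquiv.norm_map]
  refine le_trans (norm_comp_inl_le _) (le_trans (hlip _ _) ?_)
  have : ((x, y₁) : E dx × E dy) - (x, y₂) = (0, y₁ - y₂) := by simp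
  rw [this]
  have : ‖((0, y₁ - y₂) : E dx × E dy)‖ = ‖y₁ - y₂‖ := by simp [Prod.norm_def]
  rw [this]

lemma grady_lip {f : E dx × E dy → ℝ} {Lg : ℝ≥0} (hf : Differentiable ℝ f)
    (hlip : ∀ p q : E dx × E dy, ‖fderiv ℝ f p - fderiv ℝ f q‖ ≤ (Lg : ℝ) * ‖p - q‖)
    (x : E dx) (y₁ y₂ : E dy) :
    ‖grady f x y₁ - grady f x y₂‖ ≤ (Lg : ℝ) * ‖y₁ - y₂‖ := by
  have e : grady f x y₁ - grady f x y₂ = (InnerProductSpace.toDual ℝ (E dy)).symm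
      (((fderiv ℝ f (x, y₁)) - (fderiv ℝ f (x, y₂))).comp (ContinuousLinearMap.inr ℝ (E dx) (E dy))) := by
    rw [grady, grady, gradient, gradient, fderiv_partial_y f hf, fderiv_partial_y f hf,
      ← LinearIsometryEquiv.map_sub]
    congr 1
  rw [e, LinearIsometryEquiv.norm_map]
  refine le_trans (norm_comp_inr_le _) (le_trans (hlip _ _) ?_)
  have : ((x, y₁) : E dx × E dy) - (x, y₂) = (0, y₁ - y₂) := by simp
  rw [this]
  have : ‖((0, y₁ - y₂) : E dx × E dy)‖ = ‖y₁ - y₂‖ := by simp [Prod.norm_def]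
  rw [this]

lemma ymu_close {ystar : E dx → E dy} {Ly : ℝ≥0} (hLip : LipschitzWith Ly ystar)
    {μ : ℝ} (hμ : 0 < μ) (x : E dx) :
    ‖ymu ystar μ x - ystar x‖ ≤ (Ly : ℝ) * μ := by
  have e : ymu ystar μ x - ystar x = ∫ u, (ystar (x + μ • u) - ystar x) ∂(uniformBall dx) := by
    rw [integral_sub (integrable_shift hLip.continuous x μ) (integrable_const _)]
    simp [ymu]
  rw [e]
  refine le_trans (norm_integral_le_of_norm_le (μ := uniformBall dx)
    (integrable_const ((Ly : ℝ) * μ)) ?_) (by simp)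
  filter_upwards [ae_norm_le_one dx] with u hu
  have h1 : ‖ystar (x + μ • u) - ystar x‖ ≤ (Ly : ℝ) * ‖μ • u‖ := by
    have := hLip.dist_le_mul (x + μ • u) x
    rw [dist_eq_norm, dist_eq_norm] at this
    simpa using this
  refine h1.trans ?_
  rw [norm_smul, Real.norm_eq_abs, abs_of_pos hμ]
  calc (Ly : ℝ) * (μ * ‖u‖) ≤ (Ly : ℝ) * (μ * 1) := by
        refine mul_le_mul_of_nonneg_left ?_ Ly.coe_nonneg
        exact mul_le_mul_of_nonneg_left hu hμ.le
  _ = (Ly : ℝ) * μ := by ring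

end Aux

set_option maxHeartbeats 1000000 in
/-- with `ḡ(x) = ∇_x f(x, y*(x)) + Jac y_μ(x)ᵀ ∇_y f(x, y*(x))` and
`C_p = L_g(1+L_y)L_y`, one has `⟨∇F_μ(x), ḡ(x)⟩ ≥ ½‖ḡ(x)‖² − ½ C_p² μ²`. -/
theorem stmt14 (dx dy : ℕ) (f : E dx × E dy → ℝ) (Lg : ℝ≥0)
    (hfdiff : Differentiable ℝ f)
    (hgradLip : ∀ p q : E dx × E dy, ‖fderiv ℝ f p - fderiv ℝ f q‖ ≤ (Lg : ℝ) * ‖p - q‖)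
    (ystar : E dx → E dy) (Ly : ℝ≥0) (hLip : LipschitzWith Ly ystar)
    (μ : ℝ) (hμ : 0 < μ) (x : E dx) :
    ⟪gradient (Fmu f ystar μ) x,
        gradx f x (ystar x)
          + (ContinuousLinearMap.adjoint (fderiv ℝ (ymu ystar μ) x)) (grady f x (ystar x))⟫_ℝ
      ≥ (1 / 2) * ‖gradx f x (ystar x)
            + (ContinuousLinearMap.adjoint (fderiv ℝ (ymu ystar μ) x))
                (grady f x (ystar x))‖ ^ 2
        - (1 / 2) * ((Lg : ℝ) * (1 + (Ly : ℝ)) * (Ly : ℝ)) ^ 2 * μ ^ 2 := by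
  obtain ⟨hd, hn⟩ := ymu_deriv hLip hμ.ne' x
  set A := fderiv ℝ (ymu ystar μ) x with hA
  have hA' : HasFDerivAt (ymu ystar μ) A x := hd.differentiableAt.hasFDerivAt
  have hAn : ‖A‖ ≤ (Ly : ℝ) := by rw [hA, hd.fderiv]; exact hn
  set yh := ymu ystar μ x with hyh
  -- chain rule
  have hchain : HasFDerivAt (Fmu f ystar μ)
      ((fderiv ℝ f (x, yh)).comp ((ContinuousLinearMap.id ℝ (E dx)).prod A)) x :=
    HasFDerivAt.comp x (hfdiff (x, yh)).hasFDerivAt ((hasFDerivAt_id x).prodMk hA')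
  -- gradient identity
  have hgrad : gradient (Fmu f ystar μ) x = gradx f x yh
      + (ContinuousLinearMap.adjoint A) (grady f x yh) := by
    refine ext_inner_right ℝ fun v => ?_
    rw [inner_gradient, hchain.fderiv, inner_add_left, ContinuousLinearMap.adjoint_inner_left]
    rw [gradx, grady, inner_gradient, inner_gradient, fderiv_partial_x f hfdiff,
      fderiv_partial_y f hfdiff]
    have : ((v, A v) : E dx × E dy) = (v, 0) + (0, A v) := by simp
    simp only [ContinuousLinearMap.comp_apply, ContinuousLinearMap.coe_comp',
      Function.comp_apply, ContinuousLinearMap.prod_apply, ContinuousLinearMap.id_apply,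
      ContinuousLinearMap.inl_apply, ContinuousLinearMap.inr_apply]
    rw [this, map_add]
  set g := gradient (Fmu f ystar μ) x with hg
  set gb := gradx f x (ystar x) + (ContinuousLinearMap.adjoint A) (grady f x (ystar x)) with hgb
  have hclose : ‖yh - ystar x‖ ≤ (Ly : ℝ) * μ := ymu_close hLip hμ x
  have hdist : ‖g - gb‖ ≤ ((Lg : ℝ) * (1 + (Ly : ℝ)) * (Ly : ℝ)) * μ := by
    have e : g - gb = (gradx f x yh - gradx f x (ystar x))
        + (ContinuousLinearMap.adjoint A) (grady f x yh - grady f x (ystar x)) := by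
      rw [hgrad, hgb, map_sub]; abel
    rw [e]
    have h1 : ‖gradx f x yh - gradx f x (ystar x)‖ ≤ (Lg : ℝ) * ‖yh - ystar x‖ :=
      gradx_lip hfdiff hgradLip x yh (ystar x)
    have h2 : ‖(ContinuousLinearMap.adjoint A) (grady f x yh - grady f x (ystar x))‖
        ≤ (Ly : ℝ) * ((Lg : ℝ) * ‖yh - ystar x‖) := by
      refine le_trans ((ContinuousLinearMap.adjoint A).le_opNorm _) ?_
      have hadj : ‖ContinuousLinearMap.adjoint A‖ = ‖A‖ := ContinuousLinearMap.adjoint.norm_map A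
      refine mul_le_mul ?_ (grady_lip hfdiff hgradLip x yh (ystar x)) (norm_nonneg _)
        Ly.coe_nonneg
      rw [hadj]; exact hAn
    calc ‖_ + _‖ ≤ _ + _ := norm_add_le _ _
    _ ≤ (Lg : ℝ) * ‖yh - ystar x‖ + (Ly : ℝ) * ((Lg : ℝ) * ‖yh - ystar x‖) := add_le_add h1 h2
    _ ≤ (Lg : ℝ) * ((Ly : ℝ) * μ) + (Ly : ℝ) * ((Lg : ℝ) * ((Ly : ℝ) * μ)) := by
        have hLg := Lg.coe_nonneg; have hLy := Ly.coe_nonneg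
        have h3 : (Lg : ℝ) * ‖yh - ystar x‖ ≤ (Lg : ℝ) * ((Ly : ℝ) * μ) :=
          mul_le_mul_of_nonneg_left hclose hLg
        exact add_le_add h3 (mul_le_mul_of_nonneg_left h3 hLy)
    _ = ((Lg : ℝ) * (1 + (Ly : ℝ)) * (Ly : ℝ)) * μ := by ring
  have h1 : ⟪g, gb⟫_ℝ = ‖gb‖ ^ 2 + ⟪g - gb, gb⟫_ℝ := by
    rw [inner_sub_left, real_inner_self_eq_norm_sq]; ring
  have h2 : |⟪g - gb, gb⟫_ℝ| ≤ ‖g - gb‖ * ‖gb‖ := abs_real_inner_le_norm _ _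
  have h2' := abs_le.1 h2
  have hnn : (0:ℝ) ≤ ‖g - gb‖ := norm_nonneg _
  have hnn2 : (0:ℝ) ≤ ‖gb‖ := norm_nonneg _
  have hC : (0:ℝ) ≤ ((Lg : ℝ) * (1 + (Ly : ℝ)) * (Ly : ℝ)) * μ := le_trans hnn hdist
  nlinarith [sq_nonneg (‖g - gb‖ - ‖gb‖), sq_nonneg (‖g - gb‖ + ‖gb‖), hdist, h2'.1]
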